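/- The monomial level-l quasisymmetric functions satisfy the quasi-shuffle product rule: M_I · M_J = Σ_K M_K, where the sum is over all quasi-shuffles K of the vector compositions I and J (shuffles of the columns of I with the columns of J in which a column of I and a column of J may be merged by vector addition as they pass each other). -/

import Mathlib

open scoped Classical

/-- The multiset of quasi-shuffles of two lists of columns: shuffles of the
columns of `I` with the columns of `J` in which a column of `I` and a column
of `J` may be merged by vector addition as they pass each other. -/
def qsh {l : ℕ} : List (Fin l → ℕ) → List (Fin l → ℕ) → Multiset (List (Fin l → ℕ))
  | [], J => {J}
  | a :: I, [] => {a :: I}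
  | a :: I, b :: J =>
      (qsh I (b :: J)).map (a :: ·) + (qsh (a :: I) J).map (b :: ·) +
        (qsh I J).map fun K => (a + b) :: K
  termination_by I J => I.length + J.length
  decreasing_by all_goals (simp [List.length]; try omega)

/-- The level-`l` monomial quasisymmetric function `M_I`, as a formal power
series in the colored commuting variables `x_j^{(c)}` (`j ∈ ℕ`, `c` a color):
`M_I = Σ_{j_1 < ⋯ < j_m} x_{j_1}^{i_1} ⋯ x_{j_m}^{i_m}`, where
`x_j^{v} = Π_c (x_j^{(c)})^{v c}`. -/
noncomputable def Mfun (l : ℕ) (I : List (Fin l → ℕ)) :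
    MvPowerSeries (ℕ × Fin l) ℚ := fun d =>
  if ∃ j : Fin I.length → ℕ, StrictMono j ∧
      ∀ (a : ℕ) (c : Fin l),
        d (a, c) = ∑ k : Fin I.length, if a = j k then I.get k c else 0
    then 1 else 0

namespace QSAux
variable {l : ℕ}

noncomputable def Ee (n : ℕ) (v : Fin l → ℕ) : (ℕ × Fin l) →₀ ℕ :=
  Finsupp.onFinset ({n} ×ˢ (Finset.univ : Finset (Fin l)))
    (fun p => if p.1 = n then v p.2 else 0)
    (fun p h => by
      by_cases hp : p.1 = n
      · simp [Finset.mem_product, hp, Prod.ext_iff]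
      · simp [hp] at h)

@[simp] lemma Ee_apply (n : ℕ) (v : Fin l → ℕ) (a : ℕ) (c : Fin l) :
    Ee n v (a, c) = if a = n then v c else 0 := rfl

noncomputable def derase (d : (ℕ × Fin l) →₀ ℕ) (n : ℕ) : (ℕ × Fin l) →₀ ℕ :=
  d.filter (fun p => p.1 ≠ n)

@[simp] lemma derase_apply (d : (ℕ × Fin l) →₀ ℕ) (n a : ℕ) (c : Fin l) :
    derase d n (a, c) = if a = n then 0 else d (a, c) := by
  rw [derase, Finsupp.filter_apply]; split_ifs <;> simp_all

def Rd (I : List (Fin l → ℕ)) (d : (ℕ × Fin l) →₀ ℕ) : Prop :=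
  ∃ j : Fin I.length → ℕ, StrictMono j ∧
    ∀ (a : ℕ) (c : Fin l),
      d (a, c) = ∑ k : Fin I.length, if a = j k then I.get k c else 0

noncomputable def Afn (I : List (Fin l → ℕ)) (d : (ℕ × Fin l) →₀ ℕ) : ℚ :=
  if Rd I d then 1 else 0

lemma Rd_nil (d : (ℕ × Fin l) →₀ ℕ) : Rd [] d ↔ d = 0 := by
  constructor
  · rintro ⟨j, -, h⟩
    ext ⟨a, c⟩
    simpa using h a c
  · rintro rfl
    exact ⟨fun k => k.elim0, fun k => k.elim0, by simp⟩

lemma sum_ite_inj {m : ℕ} (j : Fin m → ℕ) (hj : Function.Injective j) (k₀ : Fin m)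
    (f : Fin m → ℕ) : (∑ k, if j k₀ = j k then f k else 0) = f k₀ := by
  rw [Finset.sum_eq_single k₀]
  · simp
  · intro k _ hk
    rw [if_neg]
    exact fun h => hk (hj h.symm)
  · simp

lemma Rd_cons_iff (v : Fin l → ℕ) (I : List (Fin l → ℕ)) (d : (ℕ × Fin l) →₀ ℕ) :
    Rd (v :: I) d ↔ ∃ j : Fin (I.length + 1) → ℕ, StrictMono j ∧
      ∀ (a : ℕ) (c : Fin l),
        d (a, c) = ∑ k : Fin (I.length + 1), if a = j k then (v :: I).get k c else 0 :=
  Iff.rfl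

lemma Rd_cons_head (v : Fin l → ℕ) (I : List (Fin l → ℕ)) (d : (ℕ × Fin l) →₀ ℕ)
    (h : Rd (v :: I) d) : ∃ n, ∀ c, d (n, c) = v c := by
  rw [Rd_cons_iff] at h
  obtain ⟨j, hm, h⟩ := h
  refine ⟨j 0, fun c => ?_⟩
  rw [h (j 0) c, sum_ite_inj j hm.injective 0]
  rfl

lemma Rd_cons_zero (v : Fin l → ℕ) (hv : v ≠ 0) (I : List (Fin l → ℕ)) :
    ¬ Rd (v :: I) (0 : (ℕ × Fin l) →₀ ℕ) := by
  intro h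
  obtain ⟨n, hn⟩ := Rd_cons_head v I 0 h
  exact hv (funext fun c => ((hn c).symm.trans (by simp)))

lemma Rd_cons (v : Fin l → ℕ) (I : List (Fin l → ℕ)) (hv : v ≠ 0)
    (hI : ∀ w ∈ I, w ≠ 0) (d : (ℕ × Fin l) →₀ ℕ) (n₀ : ℕ)
    (hlow : ∀ m < n₀, ∀ c, d (m, c) = 0) (hr : ∃ c, d (n₀, c) ≠ 0) :
    Rd (v :: I) d ↔ (∀ c, d (n₀, c) = v c) ∧ Rd I (derase d n₀) := by
  rw [Rd_cons_iff]
  constructor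
  · rintro ⟨j, hm, h⟩
    have hhead : ∀ c, d (j 0, c) = v c := by
      intro c
      rw [h (j 0) c, sum_ite_inj j hm.injective 0]
      rfl
    have hj0 : j 0 = n₀ := by
      obtain ⟨c₀, hc₀⟩ := hr
      have hex : ∃ k, n₀ = j k := by
        by_contra hno
        push_neg at hno
        apply hc₀
        rw [h n₀ c₀]
        exact Finset.sum_eq_zero fun k _ => if_neg (hno k)
      obtain ⟨k, hk⟩ := hex
      have h1 : j 0 ≤ n₀ := hk ▸ hm.monotone (Fin.zero_le k)
      have h2 : ¬ j 0 < n₀ := by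
        intro hlt
        obtain ⟨c₁, hc₁⟩ := Function.ne_iff.1 hv
        exact hc₁ (by simpa using ((hhead c₁).symm.trans (hlow _ hlt c₁)))
      omega
    refine ⟨fun c => hj0 ▸ hhead c, fun k => j k.succ,
      hm.comp fun a b hab => Fin.succ_lt_succ_iff.mpr hab, ?_⟩
    intro a c
    rcases eq_or_ne a n₀ with rfl | ha
    · rw [derase_apply, if_pos rfl]
      refine (Finset.sum_eq_zero fun k _ => if_neg fun hk => ?_).symm
      have h3 : j 0 < j k.succ := hm (Fin.succ_pos k)
      have hk' : a = j k.succ := hk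
      omega
    · rw [derase_apply, if_neg ha, h a c, Fin.sum_univ_succ, if_neg (by rw [hj0]; exact ha)]
      simp
  · rintro ⟨hrow, j', hm', h'⟩
    have hgt : ∀ k, n₀ < j' k := by
      intro k
      have hne : I.get k ≠ 0 := hI _ (I.get_mem k)
      obtain ⟨c, hc⟩ := Function.ne_iff.1 hne
      have hd : derase d n₀ (j' k, c) ≠ 0 := by
        rw [h' (j' k) c, sum_ite_inj j' hm'.injective k]
        exact hc
      rw [derase_apply] at hd
      rcases lt_trichotomy (j' k) n₀ with h1 | h1 | h1
      · rw [if_neg (Nat.ne_of_lt h1)] at hd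
        exact absurd (hlow _ h1 c) hd
      · simp [h1] at hd
      · exact h1
    refine ⟨Fin.cases n₀ j', ?_, ?_⟩
    · intro x y hxy
      induction x using Fin.cases with
      | zero =>
        induction y using Fin.cases with
        | zero => exact absurd hxy (lt_irrefl _)
        | succ k => simpa using hgt k
      | succ k =>
        induction y using Fin.cases with
        | zero => exact absurd hxy (by simp [Fin.lt_iff_val_lt_val])
        | succ k' =>
          simp only [Fin.cases_succ]
          exact hm' (by simpa [Fin.succ_lt_succ_iff] using hxy)
    · intro a c
      rw [Fin.sum_univ_succ]
      simp only [Fin.cases_zero, Fin.cases_succ]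
      have h2 : (∑ k : Fin I.length, if a = j' k then (v :: I).get (Fin.succ k) c else 0)
          = derase d n₀ (a, c) := by
        rw [h' a c]
        rfl
      rcases eq_or_ne a n₀ with rfl | ha
      · simp only [eq_self_iff_true, ite_true]
        change d (a, c) = _ + (∑ k : Fin I.length, if a = j' k then (v :: I).get (Fin.succ k) c else 0)
        rw [h2, derase_apply, if_pos rfl, hrow c]
        rfl
      · simp only [ha, ite_false]
        change d (a, c) = _ + (∑ k : Fin I.length, if a = j' k then (v :: I).get (Fin.succ k) c else 0)
        rw [h2, derase_apply, if_neg ha]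
        simp [List.get]

lemma Afn_nil (d : (ℕ × Fin l) →₀ ℕ) :
    Afn ([] : List (Fin l → ℕ)) d = if d = 0 then 1 else 0 := by
  simp only [Afn, Rd_nil]

lemma Afn_cons (v : Fin l → ℕ) (I : List (Fin l → ℕ)) (hv : v ≠ 0)
    (hI : ∀ w ∈ I, w ≠ 0) (d : (ℕ × Fin l) →₀ ℕ) (n₀ : ℕ)
    (hlow : ∀ m < n₀, ∀ c, d (m, c) = 0) (hr : ∃ c, d (n₀, c) ≠ 0) :
    Afn (v :: I) d
      = if (∀ c, d (n₀, c) = v c) then Afn I (derase d n₀) else 0 := by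
  rw [Afn, if_congr (Rd_cons v I hv hI d n₀ hlow hr) rfl rfl]
  by_cases h1 : ∀ c, d (n₀, c) = v c <;> by_cases h2 : Rd I (derase d n₀) <;>
    simp [h1, h2, Afn]

lemma Rd_row_cases (v : Fin l → ℕ) (I : List (Fin l → ℕ)) (hv : v ≠ 0)
    (hI : ∀ w ∈ I, w ≠ 0) (e : (ℕ × Fin l) →₀ ℕ) (n₀ : ℕ)
    (hlow : ∀ m < n₀, ∀ c, e (m, c) = 0) (h : Rd (v :: I) e) :
    (∀ c, e (n₀, c) = 0) ∨ (∀ c, e (n₀, c) = v c) := by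
  by_cases hr : ∃ c, e (n₀, c) ≠ 0
  · exact Or.inr ((Rd_cons v I hv hI e n₀ hlow hr).1 h).1
  · push_neg at hr
    exact Or.inl hr

/-- total degree -/
def wt (d : (ℕ × Fin l) →₀ ℕ) : ℕ := d.sum fun _ m => m

lemma le_wt (e : (ℕ × Fin l) →₀ ℕ) (p : ℕ × Fin l) : e p ≤ wt e := by
  by_cases hp : p ∈ e.support
  · exact Finset.single_le_sum (fun q _ => Nat.zero_le _) hp
  · simp [Finsupp.notMem_support_iff.mp hp]

lemma wt_add (x y : (ℕ × Fin l) →₀ ℕ) : wt (x + y) = wt x + wt y :=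
  Finsupp.sum_add_index' (fun _ => rfl) (fun _ _ _ => rfl)

lemma decomp (d : (ℕ × Fin l) →₀ ℕ) (n₀ : ℕ) :
    Ee n₀ (fun c => d (n₀, c)) + derase d n₀ = d := by
  ext ⟨a, c⟩
  rw [Finsupp.add_apply, Ee_apply, derase_apply]
  split_ifs with h
  · subst h; simp
  · simp

lemma wt_derase_lt (d : (ℕ × Fin l) →₀ ℕ) (n₀ : ℕ) (hr : ∃ c, d (n₀, c) ≠ 0) :
    wt (derase d n₀) < wt d := by
  obtain ⟨c₀, hc₀⟩ := hr
  have h1 : wt d = wt (Ee n₀ (fun c => d (n₀, c))) + wt (derase d n₀) := by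
    rw [← wt_add, decomp]
  have h2 : d (n₀, c₀) ≤ wt (Ee n₀ (fun c => d (n₀, c))) := by
    have := le_wt (Ee n₀ (fun c => d (n₀, c))) (n₀, c₀)
    simpa using this
  omega

lemma derase_eq_self (e : (ℕ × Fin l) →₀ ℕ) (n₀ : ℕ) (h : ∀ c, e (n₀, c) = 0) :
    derase e n₀ = e := by
  ext ⟨m, c⟩
  rw [derase_apply]
  split_ifs with hm
  · subst hm; exact (h c).symm
  · rfl

lemma peel_gen (w1 w2 : Fin l → ℕ) (F1 F2 G1 G2 : ((ℕ × Fin l) →₀ ℕ) → ℚ)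
    (d : (ℕ × Fin l) →₀ ℕ) (n₀ : ℕ)
    (hlow : ∀ m < n₀, ∀ c, d (m, c) = 0)
    (hreq : ∀ c, d (n₀, c) = w1 c + w2 c)
    (hF1 : ∀ e : (ℕ × Fin l) →₀ ℕ, (∀ m, m < n₀ → ∀ c, e (m, c) = 0) →
      (∀ c, e (n₀, c) = w1 c) → F1 e = G1 (derase e n₀))
    (hF2 : ∀ e : (ℕ × Fin l) →₀ ℕ, (∀ m, m < n₀ → ∀ c, e (m, c) = 0) →
      (∀ c, e (n₀, c) = w2 c) → F2 e = G2 (derase e n₀)) :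
    ∑ p ∈ Finset.HasAntidiagonal.antidiagonal d,
        (if (∀ c, p.1 (n₀, c) = w1 c) ∧ (∀ c, p.2 (n₀, c) = w2 c)
          then F1 p.1 * F2 p.2 else 0)
      = ∑ q ∈ Finset.HasAntidiagonal.antidiagonal (derase d n₀), G1 q.1 * G2 q.2 := by
  rw [← Finset.sum_filter]
  refine Finset.sum_nbij' (fun p => (derase p.1 n₀, derase p.2 n₀))
    (fun q => (q.1 + Ee n₀ w1, q.2 + Ee n₀ w2)) ?_ ?_ ?_ ?_ ?_
  · intro p hp
    rw [Finset.mem_filter, Finset.HasAntidiagonal.mem_antidiagonal] at hp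
    obtain ⟨hp, hc1, hc2⟩ := hp
    have hadd : ∀ m c, p.1 (m, c) + p.2 (m, c) = d (m, c) := fun m c => by
      rw [← hp, Finsupp.add_apply]
    rw [Finset.HasAntidiagonal.mem_antidiagonal]
    show derase p.1 n₀ + derase p.2 n₀ = derase d n₀
    ext ⟨m, c⟩
    rw [Finsupp.add_apply, derase_apply, derase_apply, derase_apply]
    split_ifs with hm
    · rfl
    · exact hadd m c
  · intro q hq
    rw [Finset.HasAntidiagonal.mem_antidiagonal] at hq
    have hadd : ∀ m c, q.1 (m, c) + q.2 (m, c) = derase d n₀ (m, c) := fun m c => by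
      rw [← hq, Finsupp.add_apply]
    have hq0 : ∀ c, q.1 (n₀, c) = 0 ∧ q.2 (n₀, c) = 0 := by
      intro c
      have h1 := hadd n₀ c
      rw [derase_apply, if_pos rfl] at h1
      omega
    rw [Finset.mem_filter, Finset.HasAntidiagonal.mem_antidiagonal]
    refine ⟨?_, fun c => ?_, fun c => ?_⟩
    · show q.1 + Ee n₀ w1 + (q.2 + Ee n₀ w2) = d
      ext ⟨m, c⟩
      rw [Finsupp.add_apply, Finsupp.add_apply, Finsupp.add_apply, Ee_apply, Ee_apply]
      rcases eq_or_ne m n₀ with rfl | hm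
      · rw [if_pos rfl, if_pos rfl, (hq0 c).1, (hq0 c).2, hreq c]
        ring
      · rw [if_neg hm, if_neg hm]
        have h1 := hadd m c
        rw [derase_apply, if_neg hm] at h1
        omega
    · show (q.1 + Ee n₀ w1) (n₀, c) = w1 c
      rw [Finsupp.add_apply, Ee_apply, if_pos rfl, (hq0 c).1, zero_add]
    · show (q.2 + Ee n₀ w2) (n₀, c) = w2 c
      rw [Finsupp.add_apply, Ee_apply, if_pos rfl, (hq0 c).2, zero_add]
  · intro p hp
    rw [Finset.mem_filter, Finset.HasAntidiagonal.mem_antidiagonal] at hp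
    obtain ⟨hp, hc1, hc2⟩ := hp
    have e1 : derase p.1 n₀ + Ee n₀ w1 = p.1 := by
      ext ⟨m, c⟩
      rw [Finsupp.add_apply, derase_apply, Ee_apply]
      rcases eq_or_ne m n₀ with rfl | hm
      · rw [if_pos rfl, if_pos rfl, hc1 c, zero_add]
      · rw [if_neg hm, if_neg hm, add_zero]
    have e2 : derase p.2 n₀ + Ee n₀ w2 = p.2 := by
      ext ⟨m, c⟩
      rw [Finsupp.add_apply, derase_apply, Ee_apply]
      rcases eq_or_ne m n₀ with rfl | hm
      · rw [if_pos rfl, if_pos rfl, hc2 c, zero_add]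
      · rw [if_neg hm, if_neg hm, add_zero]
    exact Prod.ext e1 e2
  · intro q hq
    rw [Finset.HasAntidiagonal.mem_antidiagonal] at hq
    have hadd : ∀ m c, q.1 (m, c) + q.2 (m, c) = derase d n₀ (m, c) := fun m c => by
      rw [← hq, Finsupp.add_apply]
    have hq0 : ∀ c, q.1 (n₀, c) = 0 ∧ q.2 (n₀, c) = 0 := by
      intro c
      have h1 := hadd n₀ c
      rw [derase_apply, if_pos rfl] at h1
      omega
    have e1 : derase (q.1 + Ee n₀ w1) n₀ = q.1 := by
      ext ⟨m, c⟩
      rw [derase_apply, Finsupp.add_apply, Ee_apply]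
      rcases eq_or_ne m n₀ with rfl | hm
      · rw [if_pos rfl, (hq0 c).1]
      · rw [if_neg hm, if_neg hm, add_zero]
    have e2 : derase (q.2 + Ee n₀ w2) n₀ = q.2 := by
      ext ⟨m, c⟩
      rw [derase_apply, Finsupp.add_apply, Ee_apply]
      rcases eq_or_ne m n₀ with rfl | hm
      · rw [if_pos rfl, (hq0 c).2]
      · rw [if_neg hm, if_neg hm, add_zero]
    exact Prod.ext e1 e2
  · intro p hp
    rw [Finset.mem_filter, Finset.HasAntidiagonal.mem_antidiagonal] at hp
    obtain ⟨hp, hc1, hc2⟩ := hp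
    have hadd : ∀ m c, p.1 (m, c) + p.2 (m, c) = d (m, c) := fun m c => by
      rw [← hp, Finsupp.add_apply]
    have hlow1 : ∀ m, m < n₀ → ∀ c, p.1 (m, c) = 0 := by
      intro m hm c
      have h1 := hadd m c
      rw [hlow m hm c] at h1
      omega
    have hlow2 : ∀ m, m < n₀ → ∀ c, p.2 (m, c) = 0 := by
      intro m hm c
      have h1 := hadd m c
      rw [hlow m hm c] at h1
      omega
    show F1 p.1 * F2 p.2 = G1 (derase p.1 n₀) * G2 (derase p.2 n₀)
    rw [hF1 p.1 hlow1 hc1, hF2 p.2 hlow2 hc2]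

lemma step (a b : Fin l → ℕ) (I J : List (Fin l → ℕ)) (ha : a ≠ 0) (hb : b ≠ 0)
    (hI : ∀ w ∈ I, w ≠ 0) (hJ : ∀ w ∈ J, w ≠ 0) (d : (ℕ × Fin l) →₀ ℕ) (n₀ : ℕ)
    (hlow : ∀ m < n₀, ∀ c, d (m, c) = 0) (hr : ∃ c, d (n₀, c) ≠ 0) :
    ∑ p ∈ Finset.HasAntidiagonal.antidiagonal d, Afn (a :: I) p.1 * Afn (b :: J) p.2
      = (if ∀ c, d (n₀, c) = a c then
          ∑ q ∈ Finset.HasAntidiagonal.antidiagonal (derase d n₀), Afn I q.1 * Afn (b :: J) q.2 else 0)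
        + (if ∀ c, d (n₀, c) = b c then
          ∑ q ∈ Finset.HasAntidiagonal.antidiagonal (derase d n₀), Afn (a :: I) q.1 * Afn J q.2 else 0)
        + (if ∀ c, d (n₀, c) = a c + b c then
          ∑ q ∈ Finset.HasAntidiagonal.antidiagonal (derase d n₀), Afn I q.1 * Afn J q.2 else 0) := by
  have key : ∀ p ∈ Finset.HasAntidiagonal.antidiagonal d,
      Afn (a :: I) p.1 * Afn (b :: J) p.2
        = (if (∀ c, p.1 (n₀, c) = a c) ∧ (∀ c, p.2 (n₀, c) = (0 : Fin l → ℕ) c)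
            then Afn (a :: I) p.1 * Afn (b :: J) p.2 else 0)
          + (if (∀ c, p.1 (n₀, c) = (0 : Fin l → ℕ) c) ∧ (∀ c, p.2 (n₀, c) = b c)
            then Afn (a :: I) p.1 * Afn (b :: J) p.2 else 0)
          + (if (∀ c, p.1 (n₀, c) = a c) ∧ (∀ c, p.2 (n₀, c) = b c)
            then Afn (a :: I) p.1 * Afn (b :: J) p.2 else 0) := by
    intro p hp
    rw [Finset.HasAntidiagonal.mem_antidiagonal] at hp
    have hadd : ∀ m c, p.1 (m, c) + p.2 (m, c) = d (m, c) := fun m c => by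
      rw [← hp, Finsupp.add_apply]
    have hlow1 : ∀ m, m < n₀ → ∀ c, p.1 (m, c) = 0 := by
      intro m hm c
      have h1 := hadd m c
      rw [hlow m hm c] at h1
      omega
    have hlow2 : ∀ m, m < n₀ → ∀ c, p.2 (m, c) = 0 := by
      intro m hm c
      have h1 := hadd m c
      rw [hlow m hm c] at h1
      omega
    by_cases hR1 : Rd (a :: I) p.1
    · by_cases hR2 : Rd (b :: J) p.2
      · rcases Rd_row_cases a I ha hI p.1 n₀ hlow1 hR1 with h1 | h1 <;>
          rcases Rd_row_cases b J hb hJ p.2 n₀ hlow2 hR2 with h2 | h2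
        · exfalso
          obtain ⟨c₀, hc₀⟩ := hr
          apply hc₀
          rw [← hadd n₀ c₀, h1 c₀, h2 c₀]
        · rw [if_neg (fun h => ha (funext fun c => ((h.1 c).symm.trans (h1 c)))),
            if_pos ⟨fun c => h1 c, h2⟩,
            if_neg (fun h => ha (funext fun c => ((h.1 c).symm.trans (h1 c))))]
          ring
        · rw [if_pos ⟨h1, fun c => h2 c⟩,
            if_neg (fun h => ha (funext fun c => ((h1 c).symm.trans (h.1 c)))),
            if_neg (fun h => hb (funext fun c => ((h.2 c).symm.trans (h2 c))))]
          ring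
        · rw [if_neg (fun h => hb (funext fun c => ((h2 c).symm.trans (h.2 c)))),
            if_neg (fun h => ha (funext fun c => ((h1 c).symm.trans (h.1 c)))),
            if_pos ⟨h1, h2⟩]
          ring
      · have z : Afn (b :: J) p.2 = 0 := if_neg hR2
        rw [z]
        simp
    · have z : Afn (a :: I) p.1 = 0 := if_neg hR1
      rw [z]
      simp
  rw [Finset.sum_congr rfl key, Finset.sum_add_distrib, Finset.sum_add_distrib]
  have hc0 : ∃ c₀ : Fin l, True := ⟨(Function.ne_iff.1 ha).choose, trivial⟩
  congr 1
  · congr 1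
    · -- first summand
      by_cases hreq : ∀ c, d (n₀, c) = a c
      · rw [if_pos hreq]
        apply peel_gen
        · exact hlow
        · intro c
          rw [hreq c]
          simp
        · intro e helow herow
          obtain ⟨c₀, hc₀⟩ := Function.ne_iff.1 ha
          rw [Afn_cons a I ha hI e n₀ helow ⟨c₀, by rw [herow c₀]; simpa using hc₀⟩,
            if_pos herow]
        · intro e helow herow
          rw [derase_eq_self e n₀ fun c => by simpa using herow c]
      · rw [if_neg hreq]
        apply Finset.sum_eq_zero
        intro p hp
        rw [Finset.HasAntidiagonal.mem_antidiagonal] at hp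
        rw [if_neg]
        rintro ⟨hc1, hc2⟩
        apply hreq
        intro c
        rw [← hp, Finsupp.add_apply, hc1 c, hc2 c]
        simp
    · -- second summand
      by_cases hreq : ∀ c, d (n₀, c) = b c
      · rw [if_pos hreq]
        apply peel_gen
        · exact hlow
        · intro c
          rw [hreq c]
          simp
        · intro e helow herow
          rw [derase_eq_self e n₀ fun c => by simpa using herow c]
        · intro e helow herow
          obtain ⟨c₀, hc₀⟩ := Function.ne_iff.1 hb
          rw [Afn_cons b J hb hJ e n₀ helow ⟨c₀, by rw [herow c₀]; simpa using hc₀⟩,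
            if_pos herow]
      · rw [if_neg hreq]
        apply Finset.sum_eq_zero
        intro p hp
        rw [Finset.HasAntidiagonal.mem_antidiagonal] at hp
        rw [if_neg]
        rintro ⟨hc1, hc2⟩
        apply hreq
        intro c
        rw [← hp, Finsupp.add_apply, hc1 c, hc2 c]
        simp
  · -- third summand
    by_cases hreq : ∀ c, d (n₀, c) = a c + b c
    · rw [if_pos hreq]
      apply peel_gen
      · exact hlow
      · exact hreq
      · intro e helow herow
        obtain ⟨c₀, hc₀⟩ := Function.ne_iff.1 ha
        rw [Afn_cons a I ha hI e n₀ helow ⟨c₀, by rw [herow c₀]; simpa using hc₀⟩,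
          if_pos herow]
      · intro e helow herow
        obtain ⟨c₀, hc₀⟩ := Function.ne_iff.1 hb
        rw [Afn_cons b J hb hJ e n₀ helow ⟨c₀, by rw [herow c₀]; simpa using hc₀⟩,
          if_pos herow]
    · rw [if_neg hreq]
      apply Finset.sum_eq_zero
      intro p hp
      rw [Finset.HasAntidiagonal.mem_antidiagonal] at hp
      rw [if_neg]
      rintro ⟨hc1, hc2⟩
      apply hreq
      intro c
      rw [← hp, Finsupp.add_apply, hc1 c, hc2 c]

lemma qsh_nonzero (n : ℕ) : ∀ (I J : List (Fin l → ℕ)), I.length + J.length ≤ n →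
    (∀ v ∈ I, v ≠ 0) → (∀ v ∈ J, v ≠ 0) → ∀ K ∈ qsh I J, ∀ v ∈ K, v ≠ 0 := by
  induction n with
  | zero =>
    intro I J hlen hI hJ K hK
    cases I with
    | nil =>
      rw [qsh, Multiset.mem_singleton] at hK
      subst hK
      exact hJ
    | cons a I => simp at hlen
  | succ n ihn =>
    intro I J hlen hI hJ K hK
    cases I with
    | nil =>
      rw [qsh, Multiset.mem_singleton] at hK
      subst hK
      exact hJ
    | cons a I =>
      cases J with
      | nil =>
        rw [qsh, Multiset.mem_singleton] at hK
        subst hK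
        exact hI
      | cons b J =>
        have ha : a ≠ 0 := hI a (List.mem_cons_self)
        have hb : b ≠ 0 := hJ b (List.mem_cons_self)
        have hI2 : ∀ v ∈ I, v ≠ 0 := fun v hv => hI v (List.mem_cons_of_mem a hv)
        have hJ2 : ∀ v ∈ J, v ≠ 0 := fun v hv => hJ v (List.mem_cons_of_mem b hv)
        have hab : a + b ≠ 0 := by
          intro h
          apply ha
          funext c
          have h2 : a c + b c = 0 := congrFun h c
          show a c = 0
          omega
        have hlenA : I.length + (b :: J).length ≤ n := by simp at hlen ⊢; omega
        have hlenB : (a :: I).length + J.length ≤ n := by simp at hlen ⊢; omega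
        have hlenC : I.length + J.length ≤ n := by simp at hlen ⊢; omega
        rw [qsh] at hK
        rcases Multiset.mem_add.1 hK with hK | hK
        · rcases Multiset.mem_add.1 hK with hK | hK
          · obtain ⟨K2, hK2, rfl⟩ := Multiset.mem_map.1 hK
            intro v hv
            rcases List.mem_cons.1 hv with rfl | hv
            · exact ha
            · exact ihn I (b :: J) hlenA hI2 hJ K2 hK2 v hv
          · obtain ⟨K2, hK2, rfl⟩ := Multiset.mem_map.1 hK
            intro v hv
            rcases List.mem_cons.1 hv with rfl | hv
            · exact hb
            · exact ihn (a :: I) J hlenB hI hJ2 K2 hK2 v hv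
        · obtain ⟨K2, hK2, rfl⟩ := Multiset.mem_map.1 hK
          intro v hv
          rcases List.mem_cons.1 hv with rfl | hv
          · exact hab
          · exact ihn I J hlenC hI2 hJ2 K2 hK2 v hv

lemma main (N : ℕ) : ∀ (d : (ℕ × Fin l) →₀ ℕ), wt d ≤ N → ∀ (I J : List (Fin l → ℕ)),
    (∀ v ∈ I, v ≠ 0) → (∀ v ∈ J, v ≠ 0) →
    ∑ p ∈ Finset.HasAntidiagonal.antidiagonal d, Afn I p.1 * Afn J p.2
      = ((qsh I J).map (fun K => Afn K d)).sum := by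
  induction N using Nat.strong_induction_on with
  | _ N ih =>
  intro d hwt I J hI hJ
  cases I with
  | nil =>
    rw [qsh, Multiset.map_singleton, Multiset.sum_singleton]
    rw [Finset.sum_eq_single ((0 : (ℕ × Fin l) →₀ ℕ), d)]
    · show Afn [] 0 * Afn J d = Afn J d
      rw [Afn_nil, if_pos rfl, one_mul]
    · intro p hp hne
      rw [Finset.HasAntidiagonal.mem_antidiagonal] at hp
      have h1 : p.1 ≠ 0 := by
        intro h0
        exact hne (Prod.ext h0 (by rw [← hp, h0, zero_add]))
      rw [Afn_nil, if_neg h1, zero_mul]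
    · intro habs
      exact absurd (Finset.HasAntidiagonal.mem_antidiagonal.2 (zero_add d)) habs
  | cons a I =>
    cases J with
    | nil =>
      rw [qsh, Multiset.map_singleton, Multiset.sum_singleton]
      rw [Finset.sum_eq_single (d, (0 : (ℕ × Fin l) →₀ ℕ))]
      · show Afn (a :: I) d * Afn [] 0 = Afn (a :: I) d
        rw [Afn_nil, if_pos rfl, mul_one]
      · intro p hp hne
        rw [Finset.HasAntidiagonal.mem_antidiagonal] at hp
        have h2 : p.2 ≠ 0 := by
          intro h0
          exact hne (Prod.ext (by rw [← hp, h0, add_zero]) h0)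
        rw [Afn_nil, if_neg h2, mul_zero]
      · intro habs
        exact absurd (Finset.HasAntidiagonal.mem_antidiagonal.2 (add_zero d)) habs
    | cons b J =>
      have ha : a ≠ 0 := hI a (List.mem_cons_self)
      have hb : b ≠ 0 := hJ b (List.mem_cons_self)
      have hI2 : ∀ v ∈ I, v ≠ 0 := fun v hv => hI v (List.mem_cons_of_mem a hv)
      have hJ2 : ∀ v ∈ J, v ≠ 0 := fun v hv => hJ v (List.mem_cons_of_mem b hv)
      have hab : a + b ≠ 0 := by
        intro h
        apply ha
        funext c
        have h2 : a c + b c = 0 := congrFun h c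
        show a c = 0
        omega
      by_cases hd : d = 0
      · subst hd
        have hz : ∀ (w : Fin l → ℕ), w ≠ 0 → ∀ (X : Multiset (List (Fin l → ℕ))),
            ((X.map (w :: ·)).map (fun K => Afn K (0 : (ℕ × Fin l) →₀ ℕ))).sum = 0 := by
          intro w hw X
          rw [Multiset.map_map]
          apply Multiset.sum_eq_zero
          intro x hx
          obtain ⟨K, -, rfl⟩ := Multiset.mem_map.1 hx
          exact if_neg (Rd_cons_zero w hw K)
        rw [qsh, Multiset.map_add, Multiset.map_add, Multiset.sum_add, Multiset.sum_add,
          hz a ha, hz b hb]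
        have hz3 : (((qsh I J).map fun K => (a + b) :: K).map
            (fun K => Afn K (0 : (ℕ × Fin l) →₀ ℕ))).sum = 0 := hz (a + b) hab (qsh I J)
        rw [hz3, Finsupp.antidiagonal_zero, Finset.sum_singleton]
        rw [show Afn (a :: I) (0 : (ℕ × Fin l) →₀ ℕ) = 0 from
          if_neg (Rd_cons_zero a ha I)]
        show (0:ℚ) * Afn (b :: J) 0 = 0 + 0 + 0
        norm_num
      · have hsupp : d.support.Nonempty := Finsupp.support_nonempty_iff.2 hd
        have himg : (d.support.image Prod.fst).Nonempty := hsupp.image _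
        set n₀ := (d.support.image Prod.fst).min' himg with hn₀
        have hlow : ∀ m < n₀, ∀ c, d (m, c) = 0 := by
          intro m hm c
          by_contra h0
          have hmem : m ∈ d.support.image Prod.fst :=
            Finset.mem_image_of_mem _ (Finsupp.mem_support_iff.2 h0)
          have := Finset.min'_le _ _ hmem
          omega
        have hr : ∃ c, d (n₀, c) ≠ 0 := by
          have hmin := Finset.min'_mem _ himg
          rw [Finset.mem_image] at hmin
          obtain ⟨x, hx, hx1⟩ := hmin
          refine ⟨x.2, ?_⟩
          have hxe : x = (n₀, x.2) := Prod.ext hx1 rfl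
          rw [← hxe]
          exact Finsupp.mem_support_iff.1 hx
        have hwt2 : wt (derase d n₀) < N := lt_of_lt_of_le (wt_derase_lt d n₀ hr) hwt
        rw [step a b I J ha hb hI2 hJ2 d n₀ hlow hr]
        rw [qsh, Multiset.map_add, Multiset.map_add, Multiset.sum_add, Multiset.sum_add]
        have gen : ∀ (w : Fin l → ℕ), w ≠ 0 → ∀ (X : Multiset (List (Fin l → ℕ))),
            (∀ K ∈ X, ∀ v ∈ K, v ≠ 0) →
            ((X.map (w :: ·)).map (fun K => Afn K d)).sum
              = if (∀ c, d (n₀, c) = w c)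
                then ((X.map (fun K => Afn K (derase d n₀))).sum) else 0 := by
          intro w hw X hX
          rw [Multiset.map_map]
          by_cases h : ∀ c, d (n₀, c) = w c
          · rw [if_pos h]
            congr 1
            apply Multiset.map_congr rfl
            intro K hK
            show Afn (w :: K) d = Afn K (derase d n₀)
            rw [Afn_cons w K hw (hX K hK) d n₀ hlow hr, if_pos h]
          · rw [if_neg h]
            apply Multiset.sum_eq_zero
            intro x hx
            obtain ⟨K, hK, rfl⟩ := Multiset.mem_map.1 hx
            show Afn (w :: K) d = 0
            rw [Afn_cons w K hw (hX K hK) d n₀ hlow hr, if_neg h]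
        have hq1 := qsh_nonzero (I.length + (b :: J).length) I (b :: J) le_rfl hI2 hJ
        have hq2 := qsh_nonzero ((a :: I).length + J.length) (a :: I) J le_rfl hI hJ2
        have hq3 := qsh_nonzero (I.length + J.length) I J le_rfl hI2 hJ2
        have g3 : (((qsh I J).map fun K => (a + b) :: K).map (fun K => Afn K d)).sum
            = if (∀ c, d (n₀, c) = (a + b) c)
              then (((qsh I J).map (fun K => Afn K (derase d n₀))).sum) else 0 :=
          gen (a + b) hab (qsh I J) hq3
        rw [gen a ha _ hq1, gen b hb _ hq2, g3]
        rw [← ih _ hwt2 (derase d n₀) le_rfl I (b :: J) hI2 hJ,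
          ← ih _ hwt2 (derase d n₀) le_rfl (a :: I) J hI hJ2,
          ← ih _ hwt2 (derase d n₀) le_rfl I J hI2 hJ2]
        simp only [Pi.add_apply]

end QSAux

theorem monomial_quasi_shuffle {l : ℕ} (I J : List (Fin l → ℕ))
    (hI : ∀ v ∈ I, v ≠ 0) (hJ : ∀ v ∈ J, v ≠ 0) :
    Mfun l I * Mfun l J = ((qsh I J).map (Mfun l)).sum := by
  apply MvPowerSeries.ext
  intro d
  rw [MvPowerSeries.coeff_mul]
  calc
    ∑ p ∈ Finset.HasAntidiagonal.antidiagonal d,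
        MvPowerSeries.coeff p.1 (Mfun l I) * MvPowerSeries.coeff p.2 (Mfun l J)
      = ∑ p ∈ Finset.HasAntidiagonal.antidiagonal d, QSAux.Afn I p.1 * QSAux.Afn J p.2 := rfl
    _ = ((qsh I J).map (fun K => QSAux.Afn K d)).sum :=
        QSAux.main (QSAux.wt d) d le_rfl I J hI hJ
    _ = MvPowerSeries.coeff d ((qsh I J).map (Mfun l)).sum := by
        rw [map_multiset_sum, Multiset.map_map]
        rfl
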